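/- Assume the flow setup below and let t* = min(1/(2‖D^{(1)}V‖_{∞,M}), t₀) (with 1/0 := ∞). Then for all t ∈ (0, t*], all x ∈ K₁, all h ∈ ℝⁿ with ‖h‖ < 1, and all i ∈ {1,…,n}, one has ‖D_i Y^{x+h}(t) − D_i Y^{x}(t)‖ ≤ 8·‖D^{(2)}V‖_{∞,M}·t*·‖h‖, where D_iY^x(t) := lim_{u→0} (Y^{x+u e_i}(t) − Y^x(t))/u. -/

import Mathlib

open MeasureTheory Filter Topology Set

/-- The partial derivative of `g : ℝⁿ → ℝ` in the `i`-th coordinate direction. -/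
noncomputable def pderiv' {n : ℕ} (i : Fin n) (g : (Fin n → ℝ) → ℝ) : (Fin n → ℝ) → ℝ :=
  fun x => fderiv ℝ g x (Pi.single i 1)

/-- The iterated partial derivative `D^β g` associated with a multi-index `β : Fin n → ℕ`. -/
noncomputable def mderiv' {n : ℕ} (β : Fin n → ℕ) (g : (Fin n → ℝ) → ℝ) : (Fin n → ℝ) → ℝ :=
  (List.finRange n).foldr (fun i h => (pderiv' i)^[β i] h) g

/-- `‖D^{(j)}V‖_{∞,U} = Σ_{|β|=j} Σ_{k=1}^{n} sup_{x∈U} |D^β V_k(x)|`. -/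
noncomputable def DjNorm {n : ℕ} (j : ℕ) (V : (Fin n → ℝ) → Fin n → ℝ)
    (U : Set (Fin n → ℝ)) : ℝ :=
  ∑ β ∈ Finset.univ.filter (fun β : Fin n → Fin (j + 1) => ∑ i, (β i : ℕ) = j),
    ∑ k : Fin n,
      sSup ((fun x => |mderiv' (fun i => (β i : ℕ)) (fun z => V z k) x|) '' U)

/-- `t* = min(1/(2‖D^{(1)}V‖_{∞,M}), t₀)`, with the convention `1/0 = ∞`. -/
noncomputable def tstar {n : ℕ} (V : (Fin n → ℝ) → Fin n → ℝ) (M : Set (Fin n → ℝ))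
    (t₀ : ℝ) : ℝ :=
  if DjNorm 1 V M = 0 then t₀ else min (1 / (2 * DjNorm 1 V M)) t₀

section aux
variable {n : ℕ}

lemma pderiv'_contDiff {m : ℕ} {g : (Fin n → ℝ) → ℝ} (hg : ContDiff ℝ ((m:ℕ∞)+1) g) (i : Fin n) :
    ContDiff ℝ (m : ℕ) (pderiv' i g) := by
  have h1 : ContDiff ℝ (m:ℕ) (fderiv ℝ g) := hg.fderiv_right (le_refl _)
  exact h1.clm_apply contDiff_const

lemma fderiv_apply_eq_sum {g : (Fin n → ℝ) → ℝ} {x : Fin n → ℝ} (v : Fin n → ℝ) :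
    fderiv ℝ g x v = ∑ i, v i * pderiv' i g x := by
  conv_lhs => rw [show v = ∑ i, v i • (Pi.single i 1 : Fin n → ℝ) by
    simp only [← Pi.single_smul, smul_eq_mul, mul_one, Finset.univ_sum_single]]
  rw [map_sum]
  simp [pderiv', smul_eq_mul]

lemma pderiv'_comm {g : (Fin n → ℝ) → ℝ} (hg : ContDiff ℝ 2 g) (a b : Fin n) :
    pderiv' a (pderiv' b g) = pderiv' b (pderiv' a g) := by
  funext x
  have hd : Differentiable ℝ g := hg.differentiable (by norm_num)
  have hfd : ContDiff ℝ 1 (fderiv ℝ g) := hg.fderiv_right (by norm_num)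
  have h2 : HasFDerivAt (fderiv ℝ g) (fderiv ℝ (fderiv ℝ g) x) x :=
    ((hfd.differentiable (by norm_num)) x).hasFDerivAt
  have hsymm := second_derivative_symmetric (fun y => (hd y).hasFDerivAt) h2
    (Pi.single a 1) (Pi.single b 1)
  have key : ∀ (c d : Fin n),
      pderiv' c (pderiv' d g) x = fderiv ℝ (fderiv ℝ g) x (Pi.single c 1) (Pi.single d 1) := by
    intro c d
    have : pderiv' c (pderiv' d g) x
        = fderiv ℝ (fun y => (fderiv ℝ g y) (Pi.single d 1)) x (Pi.single c 1) := rfl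
    rw [this, fderiv_clm_apply ((hfd.differentiable (by norm_num)) x) (differentiableAt_const _)]
    simp
  rw [key, key, hsymm]

lemma foldr_pd_zero (β : Fin n → ℕ) (g : (Fin n → ℝ) → ℝ) :
    ∀ (l : List (Fin n)), (∀ m ∈ l, β m = 0) →
    l.foldr (fun i h => (pderiv' i)^[β i] h) g = g := by
  intro l
  induction l with
  | nil => intro _; rfl
  | cons a l ih =>
    intro h
    simp only [List.foldr_cons, ih (fun m hm => h m (List.mem_cons_of_mem a hm)),
      h a List.mem_cons_self, Function.iterate_zero, id]

lemma foldr_pd_one (β : Fin n → ℕ) (g : (Fin n → ℝ) → ℝ) :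
    ∀ (l : List (Fin n)), l.Nodup → ∀ i ∈ l, (∀ m ∈ l, m ≠ i → β m = 0) →
    l.foldr (fun i h => (pderiv' i)^[β i] h) g = (pderiv' i)^[β i] g := by
  intro l
  induction l with
  | nil => simp
  | cons a l ih =>
    intro hnd i hi h
    rcases List.mem_cons.1 hi with rfl | hi'
    · have : ∀ m ∈ l, β m = 0 := fun m hm =>
        h m (List.mem_cons_of_mem _ hm) (fun he => (List.nodup_cons.1 hnd).1 (he ▸ hm))
      simp only [List.foldr_cons, foldr_pd_zero β g l this]
    · have ha : β a = 0 := h a List.mem_cons_self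
        (fun he => (List.nodup_cons.1 hnd).1 (he ▸ hi'))
      simp only [List.foldr_cons, ha, Function.iterate_zero, id,
        ih (List.nodup_cons.1 hnd).2 i hi' (fun m hm hmi => h m (List.mem_cons_of_mem _ hm) hmi)]

lemma foldr_pd_two (β : Fin n → ℕ) (g : (Fin n → ℝ) → ℝ) :
    ∀ (l : List (Fin n)), l.Nodup → ∀ i ∈ l, ∀ j ∈ l, i ≠ j →
    (∀ m ∈ l, m ≠ i → m ≠ j → β m = 0) →
    l.foldr (fun i h => (pderiv' i)^[β i] h) g = (pderiv' i)^[β i] ((pderiv' j)^[β j] g) ∨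
    l.foldr (fun i h => (pderiv' i)^[β i] h) g = (pderiv' j)^[β j] ((pderiv' i)^[β i] g) := by
  intro l
  induction l with
  | nil => simp
  | cons a l ih =>
    intro hnd i hi j hj hij h
    have hnd' := List.nodup_cons.1 hnd
    rcases List.mem_cons.1 hi with rfl | hi'
    · left
      have hj' : j ∈ l := by
        rcases List.mem_cons.1 hj with rfl | hj'
        · exact absurd rfl hij
        · exact hj'
      simp only [List.foldr_cons]
      rw [foldr_pd_one β g l hnd'.2 j hj' (fun m hm hmj => h m (List.mem_cons_of_mem _ hm)
        (fun he => hnd'.1 (he ▸ hm)) hmj)]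
    · rcases List.mem_cons.1 hj with rfl | hj'
      · right
        simp only [List.foldr_cons]
        rw [foldr_pd_one β g l hnd'.2 i hi' (fun m hm hmi => h m (List.mem_cons_of_mem _ hm)
          hmi (fun he => hnd'.1 (he ▸ hm)))]
      · have ha : β a = 0 := h a List.mem_cons_self
          (fun he => hnd'.1 (he ▸ hi')) (fun he => hnd'.1 (he ▸ hj'))
        simp only [List.foldr_cons, ha, Function.iterate_zero, id]
        exact ih hnd'.2 i hi' j hj' hij (fun m hm => h m (List.mem_cons_of_mem _ hm))

lemma mderiv'_single (g : (Fin n → ℝ) → ℝ) (i : Fin n) (c : ℕ) :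
    mderiv' (fun m => if m = i then c else 0) g = (pderiv' i)^[c] g := by
  have := foldr_pd_one (fun m => if m = i then c else 0) g (List.finRange n)
    (List.nodup_finRange n) i (List.mem_finRange i) (fun m _ hmi => if_neg hmi)
  simpa [mderiv'] using this

lemma mderiv'_pair (g : (Fin n → ℝ) → ℝ) (i j : Fin n) (hij : i ≠ j) (ci cj : ℕ) :
    mderiv' (fun m => if m = i then ci else if m = j then cj else 0) g
      = (pderiv' i)^[ci] ((pderiv' j)^[cj] g) ∨
    mderiv' (fun m => if m = i then ci else if m = j then cj else 0) g
      = (pderiv' j)^[cj] ((pderiv' i)^[ci] g) := by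
  have := foldr_pd_two (fun m => if m = i then ci else if m = j then cj else 0) g
    (List.finRange n) (List.nodup_finRange n) i (List.mem_finRange i) j (List.mem_finRange j)
    hij (fun m _ hmi hmj => by simp [if_neg hmi, if_neg hmj])
  simpa [mderiv', if_neg (Ne.symm hij), hij] using this

/-- ordered-pair multi-index -/
def bord (i j : Fin n) : Fin n → ℕ :=
  fun m => (if m = i then 1 else 0) + (if m = j then 1 else 0)

lemma mderiv'_bord {g : (Fin n → ℝ) → ℝ} (hg : ContDiff ℝ 2 g) (i j : Fin n) :
    mderiv' (bord i j) g = pderiv' i (pderiv' j g) := by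
  rcases eq_or_ne i j with rfl | hij
  · have h0 : bord i i = fun m => if m = i then 2 else 0 := by
      funext m; unfold bord; split_ifs <;> rfl
    rw [h0, mderiv'_single]
    rfl
  · have h0 : bord i j = fun m => if m = i then 1 else if m = j then 1 else 0 := by
      funext m; unfold bord
      rcases eq_or_ne m i with rfl | hmi
      · rw [if_pos rfl, if_pos rfl, if_neg hij]
      · rw [if_neg hmi, if_neg hmi, zero_add]
    rw [h0]
    rcases mderiv'_pair g i j hij 1 1 with h | h
    · rw [h]; rfl
    · rw [h]
      show pderiv' j (pderiv' i g) = pderiv' i (pderiv' j g)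
      exact pderiv'_comm hg j i

lemma bord_comm (i j : Fin n) : bord i j = bord j i := by
  funext m; unfold bord; ring

end aux

section sums
variable {n : ℕ} {V : (Fin n → ℝ) → Fin n → ℝ} {M : Set (Fin n → ℝ)}

lemma sSup_abs_nonneg (f : (Fin n → ℝ) → ℝ) (U : Set (Fin n → ℝ)) :
    0 ≤ sSup ((fun x => |f x|) '' U) :=
  Real.sSup_nonneg (by rintro y ⟨x, -, rfl⟩; exact abs_nonneg _)

lemma DjNorm_nonneg (j : ℕ) (U : Set (Fin n → ℝ)) : 0 ≤ DjNorm j V U := by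
  apply Finset.sum_nonneg; intro β _
  exact Finset.sum_nonneg fun k _ => sSup_abs_nonneg _ _

lemma bord_key : ∀ a b a' b' : Fin n, bord a b = bord a' b' → a' = a ∨ a' = b := by
  intro a b a' b' h
  by_contra hc
  push_neg at hc
  have hthis := congrFun h a'
  unfold bord at hthis
  rw [if_neg hc.1, if_neg hc.2, if_pos rfl] at hthis
  split_ifs at hthis <;> omega

lemma bord_inj {i j i' j' : Fin n} (hij : i ≤ j) (hij' : i' ≤ j')
    (h : bord i j = bord i' j') : i = i' ∧ j = j' := by
  have hA : (i':ℕ) = i ∨ (i':ℕ) = j :=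
    (bord_key i j i' j' h).imp (congrArg Fin.val) (congrArg Fin.val)
  have hB : (j':ℕ) = i ∨ (j':ℕ) = j :=
    (bord_key i j j' i' (by rw [h, bord_comm])).imp (congrArg Fin.val) (congrArg Fin.val)
  have hC : (i:ℕ) = i' ∨ (i:ℕ) = j' :=
    (bord_key i' j' i j h.symm).imp (congrArg Fin.val) (congrArg Fin.val)
  have hD : (j:ℕ) = i' ∨ (j:ℕ) = j' :=
    (bord_key i' j' j i (by rw [← h, bord_comm])).imp (congrArg Fin.val) (congrArg Fin.val)
  have h1 : (i:ℕ) ≤ j := hij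
  have h2 : (i':ℕ) ≤ j' := hij'
  have : (i:ℕ) = i' ∧ (j:ℕ) = j' := by omega
  exact ⟨Fin.ext this.1, Fin.ext this.2⟩

/-- `Fin 3`-valued version of `bord`. -/
def bordF (i j : Fin n) : Fin n → Fin 3 :=
  fun m => (if m = i then 1 else 0) + (if m = j then 1 else 0)

lemma bordF_coe (i j : Fin n) : (fun m => ((bordF i j m : Fin 3) : ℕ)) = bord i j := by
  funext m; unfold bordF bord; split_ifs <;> rfl

lemma bordF_sum (i j : Fin n) : (∑ m, ((bordF i j m : Fin 3) : ℕ)) = 2 := by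
  have : ∀ m, ((bordF i j m : Fin 3) : ℕ) = bord i j m := fun m => congrFun (bordF_coe i j) m
  simp only [this]
  unfold bord
  rw [Finset.sum_add_distrib]
  simp [Finset.sum_ite_eq']

lemma sum1_le (k : Fin n) :
    (∑ i, sSup ((fun x => |pderiv' i (fun z => V z k) x|) '' M)) ≤ DjNorm 1 V M := by
  classical
  set G : (Fin n → Fin 2) → ℝ := fun β =>
    sSup ((fun x => |mderiv' (fun i => (β i : ℕ)) (fun z => V z k) x|) '' M) with hG
  have hco : ∀ i : Fin n, (fun m : Fin n => (((if m = i then 1 else 0 : Fin 2)) : ℕ))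
      = fun m => if m = i then 1 else 0 := by
    intro i; funext m; split_ifs <;> rfl
  have h1 : ∀ i : Fin n,
      sSup ((fun x => |pderiv' i (fun z => V z k) x|) '' M)
        = G (fun m => if m = i then 1 else 0) := by
    intro i
    rw [hG]
    simp only [hco]
    rw [show mderiv' (fun m => if m = i then 1 else 0) (fun z => V z k)
        = (pderiv' i)^[1] (fun z => V z k) from mderiv'_single _ i 1]
    rfl
  calc (∑ i, sSup ((fun x => |pderiv' i (fun z => V z k) x|) '' M))
      = ∑ i : Fin n, G (fun m => if m = i then 1 else 0) :=
        Finset.sum_congr rfl fun i _ => h1 i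
    _ = ∑ β ∈ Finset.univ.image
          (fun i : Fin n => (fun m => if m = i then 1 else 0 : Fin n → Fin 2)), G β := by
        rw [Finset.sum_image]
        intro a _ b _ hab
        by_contra hne
        have h := congrFun hab a
        beta_reduce at h
        rw [if_pos rfl, if_neg hne] at h
        exact absurd h (by decide)
    _ ≤ ∑ β ∈ Finset.univ.filter (fun β : Fin n → Fin 2 => ∑ i, (β i : ℕ) = 1), G β := by
        apply Finset.sum_le_sum_of_subset_of_nonneg
        · intro β hβ
          simp only [Finset.mem_image] at hβ
          obtain ⟨i, -, rfl⟩ := hβ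
          simp only [Finset.mem_filter, Finset.mem_univ, true_and]
          simp only [hco]
          simp [Finset.sum_ite_eq']
        · intro β _ _; exact sSup_abs_nonneg _ _
    _ ≤ DjNorm 1 V M := by
        apply Finset.sum_le_sum
        intro β _
        exact Finset.single_le_sum (f := fun k' =>
          sSup ((fun x => |mderiv' (fun i => (β i : ℕ)) (fun z => V z k') x|) '' M))
          (fun k' _ => sSup_abs_nonneg _ _) (Finset.mem_univ k)

lemma sum2_le (k : Fin n) (hg : ContDiff ℝ 2 (fun z => V z k)) :
    (∑ i, ∑ j, sSup ((fun x => |pderiv' i (pderiv' j (fun z => V z k)) x|) '' M))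
      ≤ 2 * DjNorm 2 V M := by
  classical
  set F : Fin n × Fin n → ℝ := fun p =>
    sSup ((fun x => |mderiv' (bord p.1 p.2) (fun z => V z k) x|) '' M) with hF
  have hFsymm : ∀ p : Fin n × Fin n, F p = F p.swap := by
    intro p; rw [hF]; simp only [Prod.fst_swap, Prod.snd_swap, bord_comm]
  have hFnn : ∀ p : Fin n × Fin n, 0 ≤ F p := fun p => sSup_abs_nonneg _ _
  have hstep : (∑ i, ∑ j, sSup ((fun x => |pderiv' i (pderiv' j (fun z => V z k)) x|) '' M))
      = ∑ p ∈ Finset.univ ×ˢ Finset.univ, F p := by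
    rw [Finset.sum_product]
    refine Finset.sum_congr rfl fun i _ => Finset.sum_congr rfl fun j _ => ?_
    rw [hF]
    simp only [mderiv'_bord hg]
  set T : Finset (Fin n × Fin n) :=
    (Finset.univ ×ˢ Finset.univ).filter (fun p => p.1 ≤ p.2) with hT
  have hsplit := Finset.sum_filter_add_sum_filter_not (Finset.univ ×ˢ Finset.univ)
    (fun p : Fin n × Fin n => p.1 ≤ p.2) F
  have hswap : (∑ p ∈ (Finset.univ ×ˢ Finset.univ).filter
      (fun p : Fin n × Fin n => ¬ p.1 ≤ p.2), F p) ≤ ∑ p ∈ T, F p := by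
    have himg : ∀ p ∈ (Finset.univ ×ˢ Finset.univ).filter
        (fun p : Fin n × Fin n => ¬ p.1 ≤ p.2), p.swap ∈ T := by
      intro p hp
      simp only [Finset.mem_filter, Finset.mem_product, Finset.mem_univ, true_and, hT,
        and_true, Prod.fst_swap, Prod.snd_swap] at hp ⊢
      exact le_of_lt (lt_of_not_ge hp)
    calc (∑ p ∈ (Finset.univ ×ˢ Finset.univ).filter
          (fun p : Fin n × Fin n => ¬ p.1 ≤ p.2), F p)
        = ∑ p ∈ ((Finset.univ ×ˢ Finset.univ).filter
            (fun p : Fin n × Fin n => ¬ p.1 ≤ p.2)).image Prod.swap, F p := by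
          rw [Finset.sum_image (fun a _ b _ hab => Prod.swap_injective hab)]
          exact Finset.sum_congr rfl fun p _ => (hFsymm p.swap).symm ▸ (hFsymm p)
      _ ≤ ∑ p ∈ T, F p := by
          apply Finset.sum_le_sum_of_subset_of_nonneg
          · intro p hp
            simp only [Finset.mem_image] at hp
            obtain ⟨q, hq, rfl⟩ := hp
            exact himg q hq
          · intro p _ _; exact hFnn p
  have hTbound : (∑ p ∈ T, F p) ≤ DjNorm 2 V M := by
    set G : (Fin n → Fin 3) → ℝ := fun β =>
      sSup ((fun x => |mderiv' (fun i => (β i : ℕ)) (fun z => V z k) x|) '' M) with hGdef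
    have hFG : ∀ p : Fin n × Fin n, F p = G (bordF p.1 p.2) := by
      intro p
      exact (congrArg (fun b => sSup ((fun x => |mderiv' b (fun z => V z k) x|) '' M))
        (bordF_coe p.1 p.2)).symm
    calc (∑ p ∈ T, F p) = ∑ p ∈ T, G (bordF p.1 p.2) :=
          Finset.sum_congr rfl fun p _ => hFG p
      _ = ∑ β ∈ T.image (fun p : Fin n × Fin n => bordF p.1 p.2), G β := by
          rw [Finset.sum_image]
          intro a ha b hb hab
          simp only [hT, Finset.mem_coe, Finset.mem_filter] at ha hb
          have : bord a.1 a.2 = bord b.1 b.2 := by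
            rw [← bordF_coe, ← bordF_coe, show bordF a.1 a.2 = bordF b.1 b.2 from hab]
          obtain ⟨h1, h2⟩ := bord_inj ha.2 hb.2 this
          exact Prod.ext h1 h2
      _ ≤ ∑ β ∈ Finset.univ.filter (fun β : Fin n → Fin 3 => ∑ i, (β i : ℕ) = 2), G β := by
          apply Finset.sum_le_sum_of_subset_of_nonneg
          · intro β hβ
            simp only [Finset.mem_image] at hβ
            obtain ⟨p, -, rfl⟩ := hβ
            simp only [Finset.mem_filter, Finset.mem_univ, true_and]
            exact bordF_sum p.1 p.2
          · intro β _ _; exact sSup_abs_nonneg _ _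
      _ ≤ DjNorm 2 V M := by
          apply Finset.sum_le_sum
          intro β _
          exact Finset.single_le_sum (f := fun k' =>
            sSup ((fun x => |mderiv' (fun i => (β i : ℕ)) (fun z => V z k') x|) '' M))
            (fun k' _ => sSup_abs_nonneg _ _) (Finset.mem_univ k)
  have hTnn : 0 ≤ ∑ p ∈ T, F p := Finset.sum_nonneg fun p _ => hFnn p
  rw [hstep, ← hsplit]
  have := hswap
  have := hTbound
  linarith
end sums

section opnorm
variable {n : ℕ} {V : (Fin n → ℝ) → Fin n → ℝ} {M : Set (Fin n → ℝ)}

lemma bord_sum (i j : Fin n) : (∑ m, bord i j m) = 2 := by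
  rw [← bordF_coe]; exact bordF_sum i j

lemma Vk_contDiff (hV : ContDiff ℝ 3 V) (k : Fin n) : ContDiff ℝ 3 (fun z => V z k) :=
  (ContinuousLinearMap.proj k : ((Fin n → ℝ)) →L[ℝ] ℝ).contDiff.comp hV

lemma abs_pderiv'_le (hV : ContDiff ℝ 3 V)
    (hVbdd : ∀ j : ℕ, j ≤ 3 → ∀ β : Fin n → ℕ, (∑ i, β i) = j → ∀ k : Fin n,
      BddAbove ((fun x => |mderiv' β (fun z => V z k) x|) '' M))
    (k i : Fin n) {x : Fin n → ℝ} (hx : x ∈ M) :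
    |pderiv' i (fun z => V z k) x|
      ≤ sSup ((fun x => |pderiv' i (fun z => V z k) x|) '' M) := by
  apply le_csSup _ (Set.mem_image_of_mem _ hx)
  have hfun : (fun x => |pderiv' i (fun z => V z k) x|)
      = (fun x => |mderiv' (fun m => if m = i then 1 else 0) (fun z => V z k) x|) := by
    rw [mderiv'_single, Function.iterate_one]
  rw [hfun]
  exact hVbdd 1 (by norm_num) _ (by simp [Finset.sum_ite_eq']) k

lemma abs_pderiv2_le (hV : ContDiff ℝ 3 V)
    (hVbdd : ∀ j : ℕ, j ≤ 3 → ∀ β : Fin n → ℕ, (∑ i, β i) = j → ∀ k : Fin n,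
      BddAbove ((fun x => |mderiv' β (fun z => V z k) x|) '' M))
    (k i j : Fin n) {x : Fin n → ℝ} (hx : x ∈ M) :
    |pderiv' i (pderiv' j (fun z => V z k)) x|
      ≤ sSup ((fun x => |pderiv' i (pderiv' j (fun z => V z k)) x|) '' M) := by
  apply le_csSup _ (Set.mem_image_of_mem _ hx)
  have hfun : (fun x => |pderiv' i (pderiv' j (fun z => V z k)) x|)
      = (fun x => |mderiv' (bord i j) (fun z => V z k) x|) := by
    rw [mderiv'_bord ((Vk_contDiff hV k).of_le (by norm_num))]
  rw [hfun]
  exact hVbdd 2 (by norm_num) _ (bord_sum i j) k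

lemma fderivVk_bound (hV : ContDiff ℝ 3 V)
    (hVbdd : ∀ j : ℕ, j ≤ 3 → ∀ β : Fin n → ℕ, (∑ i, β i) = j → ∀ k : Fin n,
      BddAbove ((fun x => |mderiv' β (fun z => V z k) x|) '' M))
    (k : Fin n) {x : Fin n → ℝ} (hx : x ∈ M) :
    ‖fderiv ℝ (fun z => V z k) x‖ ≤ DjNorm 1 V M := by
  apply ContinuousLinearMap.opNorm_le_bound _ (DjNorm_nonneg 1 M)
  intro v
  rw [fderiv_apply_eq_sum v]
  calc ‖∑ i, v i * pderiv' i (fun z => V z k) x‖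
      ≤ ∑ i, |v i * pderiv' i (fun z => V z k) x| := by
        exact Finset.abs_sum_le_sum_abs _ _
    _ ≤ ∑ i, sSup ((fun x => |pderiv' i (fun z => V z k) x|) '' M) * ‖v‖ := by
        apply Finset.sum_le_sum
        intro i _
        rw [abs_mul, mul_comm]
        apply mul_le_mul (abs_pderiv'_le hV hVbdd k i hx) (norm_le_pi_norm v i)
          (abs_nonneg _) (le_trans (abs_nonneg _) (abs_pderiv'_le hV hVbdd k i hx))
    _ = (∑ i, sSup ((fun x => |pderiv' i (fun z => V z k) x|) '' M)) * ‖v‖ := by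
        rw [Finset.sum_mul]
    _ ≤ DjNorm 1 V M * ‖v‖ :=
        mul_le_mul_of_nonneg_right (sum1_le k) (norm_nonneg v)

lemma pderiv'Vk_lip (hMconv : Convex ℝ M) (hV : ContDiff ℝ 3 V)
    (hVbdd : ∀ j : ℕ, j ≤ 3 → ∀ β : Fin n → ℕ, (∑ i, β i) = j → ∀ k : Fin n,
      BddAbove ((fun x => |mderiv' β (fun z => V z k) x|) '' M))
    (k i : Fin n) {p q : Fin n → ℝ} (hp : p ∈ M) (hq : q ∈ M) :
    |pderiv' i (fun z => V z k) p - pderiv' i (fun z => V z k) q|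
      ≤ (∑ j, sSup ((fun x => |pderiv' j (pderiv' i (fun z => V z k)) x|) '' M)) * ‖p - q‖ := by
  have hg : ContDiff ℝ ((1:ℕ∞)+1) (fun z => V z k) := (Vk_contDiff hV k).of_le (by norm_num)
  have hg1 : ContDiff ℝ (1:ℕ) (pderiv' i (fun z => V z k)) := pderiv'_contDiff hg i
  have hd : Differentiable ℝ (pderiv' i (fun z => V z k)) := hg1.differentiable (by norm_num)
  have hbd : ∀ x ∈ M, ‖fderiv ℝ (pderiv' i (fun z => V z k)) x‖
      ≤ ∑ j, sSup ((fun x => |pderiv' j (pderiv' i (fun z => V z k)) x|) '' M) := by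
    intro x hx
    apply ContinuousLinearMap.opNorm_le_bound _
      (Finset.sum_nonneg fun j _ => sSup_abs_nonneg _ _)
    intro v
    rw [fderiv_apply_eq_sum v]
    calc ‖∑ j, v j * pderiv' j (pderiv' i (fun z => V z k)) x‖
        ≤ ∑ j, |v j * pderiv' j (pderiv' i (fun z => V z k)) x| :=
          Finset.abs_sum_le_sum_abs _ _
      _ ≤ ∑ j, sSup ((fun x => |pderiv' j (pderiv' i (fun z => V z k)) x|) '' M) * ‖v‖ := by
          apply Finset.sum_le_sum
          intro j _
          rw [abs_mul, mul_comm]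
          exact mul_le_mul (abs_pderiv2_le hV hVbdd k j i hx) (norm_le_pi_norm v j)
            (abs_nonneg _) (le_trans (abs_nonneg _) (abs_pderiv2_le hV hVbdd k j i hx))
      _ = (∑ j, sSup ((fun x => |pderiv' j (pderiv' i (fun z => V z k)) x|) '' M)) * ‖v‖ := by
          rw [Finset.sum_mul]
  exact hMconv.norm_image_sub_le_of_norm_fderiv_le (fun x _ => hd x)
    hbd hq hp

lemma fderiv_diff_bound (hMconv : Convex ℝ M) (hV : ContDiff ℝ 3 V)
    (hVbdd : ∀ j : ℕ, j ≤ 3 → ∀ β : Fin n → ℕ, (∑ i, β i) = j → ∀ k : Fin n,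
      BddAbove ((fun x => |mderiv' β (fun z => V z k) x|) '' M))
    (k : Fin n) {p q : Fin n → ℝ} (hp : p ∈ M) (hq : q ∈ M) :
    ‖fderiv ℝ (fun z => V z k) p - fderiv ℝ (fun z => V z k) q‖
      ≤ 2 * DjNorm 2 V M * ‖p - q‖ := by
  have hB := DjNorm_nonneg (V := V) 2 M
  apply ContinuousLinearMap.opNorm_le_bound _ (by positivity)
  intro v
  rw [ContinuousLinearMap.sub_apply, fderiv_apply_eq_sum v, fderiv_apply_eq_sum v,
    ← Finset.sum_sub_distrib]
  calc ‖∑ i, (v i * pderiv' i (fun z => V z k) p - v i * pderiv' i (fun z => V z k) q)‖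
      ≤ ∑ i, |v i * pderiv' i (fun z => V z k) p - v i * pderiv' i (fun z => V z k) q| :=
        Finset.abs_sum_le_sum_abs _ _
    _ ≤ ∑ i, ((∑ j, sSup ((fun x => |pderiv' j (pderiv' i (fun z => V z k)) x|) '' M))
          * ‖p - q‖) * ‖v‖ := by
        apply Finset.sum_le_sum
        intro i _
        rw [← mul_sub, abs_mul, mul_comm]
        apply mul_le_mul (pderiv'Vk_lip hMconv hV hVbdd k i hp hq) (norm_le_pi_norm v i)
          (abs_nonneg _)
        exact le_trans (abs_nonneg _) (pderiv'Vk_lip hMconv hV hVbdd k i hp hq)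
    _ = ((∑ i, ∑ j, sSup ((fun x => |pderiv' j (pderiv' i (fun z => V z k)) x|) '' M))
          * ‖p - q‖) * ‖v‖ := by
        rw [Finset.sum_mul, Finset.sum_mul]
    _ ≤ (2 * DjNorm 2 V M * ‖p - q‖) * ‖v‖ := by
        apply mul_le_mul_of_nonneg_right _ (norm_nonneg v)
        apply mul_le_mul_of_nonneg_right _ (norm_nonneg _)
        rw [Finset.sum_comm]
        exact sum2_le k ((Vk_contDiff hV k).of_le (by norm_num))
end opnorm

section flow
variable {n : ℕ} {V : (Fin n → ℝ) → Fin n → ℝ} {M : Set (Fin n → ℝ)} {t₀ : ℝ}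

lemma tstar_le_t0 (ht₀ : 0 < t₀) : tstar V M t₀ ≤ t₀ := by
  unfold tstar; split_ifs
  · exact le_rfl
  · exact min_le_right _ _

lemma tstar_pos (ht₀ : 0 < t₀) : 0 < tstar V M t₀ := by
  unfold tstar; split_ifs with hL
  · exact ht₀
  · have h0 : 0 < DjNorm 1 V M := lt_of_le_of_ne (DjNorm_nonneg 1 M) (Ne.symm hL)
    exact lt_min (by positivity) ht₀

lemma L_mul_tstar_le : DjNorm 1 V M * tstar V M t₀ ≤ 1/2 := by
  unfold tstar; split_ifs with hL
  · rw [hL]; norm_num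
  · have h0 : 0 < DjNorm 1 V M := lt_of_le_of_ne (DjNorm_nonneg 1 M) (Ne.symm hL)
    calc DjNorm 1 V M * min (1 / (2 * DjNorm 1 V M)) t₀
        ≤ DjNorm 1 V M * (1 / (2 * DjNorm 1 V M)) :=
          mul_le_mul_of_nonneg_left (min_le_left _ _) h0.le
      _ = 1/2 := by field_simp
 
lemma V_lip (hMconv : Convex ℝ M) (hV : ContDiff ℝ 3 V)
    (hVbdd : ∀ j : ℕ, j ≤ 3 → ∀ β : Fin n → ℕ, (∑ i, β i) = j → ∀ k : Fin n,
      BddAbove ((fun x => |mderiv' β (fun z => V z k) x|) '' M))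
    {p q : Fin n → ℝ} (hp : p ∈ M) (hq : q ∈ M) :
    ‖V p - V q‖ ≤ DjNorm 1 V M * ‖p - q‖ := by
  have hnn : 0 ≤ DjNorm 1 V M * ‖p - q‖ := by
    have := DjNorm_nonneg (V := V) 1 M; positivity
  rw [pi_norm_le_iff_of_nonneg hnn]
  intro k
  show ‖V p k - V q k‖ ≤ _
  exact hMconv.norm_image_sub_le_of_norm_fderiv_le
    (f := fun z => V z k)
    (fun x _ => ((Vk_contDiff hV k).differentiable (by norm_num)) x)
    (fun x hx => fderivVk_bound hV hVbdd k hx) hq hp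

lemma flow_est {K : Set (Fin n → ℝ)} {X : ℝ → Fin n → ℝ} {Y : (Fin n → ℝ) → ℝ → Fin n → ℝ}
    (hMconv : Convex ℝ M) (hV : ContDiff ℝ 3 V)
    (hVbdd : ∀ j : ℕ, j ≤ 3 → ∀ β : Fin n → ℕ, (∑ i, β i) = j → ∀ k : Fin n,
      BddAbove ((fun x => |mderiv' β (fun z => V z k) x|) '' M))
    (ht₀ : 0 < t₀)
    (hYint : ∀ x ∈ ⋃ y ∈ K, Metric.ball y (3:ℝ), ∀ t ∈ Set.Icc (0:ℝ) t₀,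
      IntervalIntegrable (fun s => V (Y x s)) volume 0 t)
    (hY : ∀ x ∈ ⋃ y ∈ K, Metric.ball y (3:ℝ), ∀ t ∈ Set.Icc (0:ℝ) t₀,
      Y x t = x + X t + ∫ s in (0:ℝ)..t, V (Y x s))
    (hYM : ∀ x ∈ ⋃ y ∈ K, Metric.ball y (3:ℝ), ∀ t ∈ Set.Icc (0:ℝ) t₀, Y x t ∈ M)
    {z z' : Fin n → ℝ} (hz : z ∈ ⋃ y ∈ K, Metric.ball y (3:ℝ))
    (hz' : z' ∈ ⋃ y ∈ K, Metric.ball y (3:ℝ))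
    {s : ℝ} (hs : s ∈ Set.Icc 0 (tstar V M t₀)) :
    ‖Y z' s - Y z s‖ * (1 - DjNorm 1 V M * s) ≤ ‖z' - z‖ := by
  set L := DjNorm 1 V M with hLdef
  have hL0 : 0 ≤ L := DjNorm_nonneg 1 M
  have hTle : tstar V M t₀ ≤ t₀ := tstar_le_t0 ht₀
  set g : ℝ → Fin n → ℝ := fun r => V (Y z' r) - V (Y z r) with hgdef
  have hgint : IntervalIntegrable g volume 0 t₀ :=
    (hYint z' hz' t₀ (Set.right_mem_Icc.2 ht₀.le)).sub (hYint z hz t₀ (Set.right_mem_Icc.2 ht₀.le))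
  set φ : ℝ → Fin n → ℝ := fun r => (z' - z) + ∫ τ in (0:ℝ)..r, g τ with hφdef
  have heq : ∀ r ∈ Set.Icc 0 t₀, Y z' r - Y z r = φ r := by
    intro r hr
    rw [hφdef]
    simp only
    rw [hY z' hz' r hr, hY z hz r hr,
      intervalIntegral.integral_sub (hYint z' hz' r hr) (hYint z hz r hr)]
    abel
  have hφcont : ContinuousOn φ (Set.Icc 0 t₀) := by
    apply continuousOn_const.add
    have := intervalIntegral.continuousOn_primitive_interval'
      (a := 0) (b₁ := 0) (b₂ := t₀) (μ := volume) (f := g) hgint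
      (by rw [Set.uIcc_of_le ht₀.le]; exact Set.left_mem_Icc.2 ht₀.le)
    rwa [Set.uIcc_of_le ht₀.le] at this
  -- bound for the integrand
  have hsub : Set.Icc (0:ℝ) s ⊆ Set.Icc 0 t₀ :=
    Set.Icc_subset_Icc le_rfl (hs.2.trans hTle)
  obtain ⟨r₀, hr₀mem, hr₀max⟩ := (isCompact_Icc (a := (0:ℝ)) (b := s)).exists_isMaxOn
    (Set.nonempty_Icc.2 hs.1) ((hφcont.mono hsub).norm)
  have hmax : ∀ r ∈ Set.Icc (0:ℝ) s, ‖φ r‖ ≤ ‖φ r₀‖ := fun r hr => hr₀max hr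
  have hgbd : ∀ r ∈ Set.Icc (0:ℝ) r₀, ‖g r‖ ≤ L * ‖φ r₀‖ := by
    intro r hr
    have hrs : r ∈ Set.Icc (0:ℝ) s := Set.Icc_subset_Icc le_rfl hr₀mem.2 hr
    have hrt₀ : r ∈ Set.Icc (0:ℝ) t₀ := hsub hrs
    have h1 : ‖g r‖ ≤ L * ‖Y z' r - Y z r‖ :=
      V_lip hMconv hV hVbdd (hYM z' hz' r hrt₀) (hYM z hz r hrt₀)
    rw [heq r hrt₀] at h1
    exact h1.trans (mul_le_mul_of_nonneg_left (hmax r hrs) hL0)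
  have hφr₀ : ‖φ r₀‖ ≤ ‖z' - z‖ + r₀ * (L * ‖φ r₀‖) := by
    have h1 : ‖φ r₀‖ ≤ ‖z' - z‖ + ‖∫ τ in (0:ℝ)..r₀, g τ‖ := norm_add_le _ _
    have h2 : ‖∫ τ in (0:ℝ)..r₀, g τ‖ ≤ ∫ τ in (0:ℝ)..r₀, ‖g τ‖ :=
      intervalIntegral.norm_integral_le_integral_norm hr₀mem.1
    have h3 : (∫ τ in (0:ℝ)..r₀, ‖g τ‖) ≤ ∫ _ in (0:ℝ)..r₀, (L * ‖φ r₀‖) := by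
      apply intervalIntegral.integral_mono_on hr₀mem.1 _ intervalIntegrable_const hgbd
      exact (hgint.mono_set (by
        rw [Set.uIcc_of_le ht₀.le, Set.uIcc_of_le hr₀mem.1]
        exact Set.Icc_subset_Icc le_rfl ((hr₀mem.2.trans hs.2).trans hTle))).norm
    rw [intervalIntegral.integral_const, smul_eq_mul, sub_zero] at h3
    linarith
  have hφs : ‖φ s‖ ≤ ‖φ r₀‖ := hmax s (Set.right_mem_Icc.2 hs.1)
  have hLr₀ : L * r₀ ≤ L * s := mul_le_mul_of_nonneg_left hr₀mem.2 hL0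
  have hr₀Lle : L * s ≤ 1/2 := by
    calc L * s ≤ L * tstar V M t₀ := mul_le_mul_of_nonneg_left hs.2 hL0
      _ ≤ 1/2 := L_mul_tstar_le
  rw [heq s (hsub (Set.right_mem_Icc.2 hs.1))]
  nlinarith [norm_nonneg (φ s), norm_nonneg (φ r₀), norm_nonneg (z' - z)]
end flow

section second
variable {n : ℕ} {V : (Fin n → ℝ) → Fin n → ℝ} {M : Set (Fin n → ℝ)} {t₀ : ℝ}

lemma integral_inv_sq {L c : ℝ} (hL : 0 ≤ L) (hc : 0 ≤ c) (hLc : L * c ≤ 1/2) :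
    (∫ r in (0:ℝ)..c, ((1 - L*r)^2)⁻¹) = c * (1 - L*c)⁻¹ := by
  have hne : ∀ r ∈ Set.uIcc (0:ℝ) c, 1 - L*r ≠ 0 := by
    intro r hr
    rw [Set.uIcc_of_le hc] at hr
    have h1 : L * r ≤ 1/2 := le_trans (mul_le_mul_of_nonneg_left hr.2 hL) hLc
    intro h0; linarith
  have hd : ∀ r ∈ Set.uIcc (0:ℝ) c,
      HasDerivAt (fun y => y * (1 - L*y)⁻¹) (((1 - L*r)^2)⁻¹) r := by
    intro r hr
    have h1 : HasDerivAt (fun y : ℝ => 1 - L*y) (-L) r := by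
      simpa using ((hasDerivAt_id r).const_mul L).const_sub 1
    have h2 := h1.inv (hne r hr)
    have h3 := (hasDerivAt_id r).mul h2
    refine h3.congr_deriv ?_
    have := hne r hr
    simp only [Pi.inv_apply, id_eq, one_mul, neg_neg]
    field_simp
    ring
  have hcont : ContinuousOn (fun r => ((1 - L*r)^2)⁻¹) (Set.uIcc (0:ℝ) c) := by
    apply ContinuousOn.inv₀
    · exact (((continuous_const.sub (continuous_const.mul continuous_id)).pow 2)).continuousOn
    · intro r hr
      exact pow_ne_zero 2 (hne r hr)
  rw [intervalIntegral.integral_eq_sub_of_hasDerivAt hd hcont.intervalIntegrable]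
  simp

lemma second_est {K : Set (Fin n → ℝ)} {X : ℝ → Fin n → ℝ} {Y : (Fin n → ℝ) → ℝ → Fin n → ℝ}
    (hMconv : Convex ℝ M) (hV : ContDiff ℝ 3 V)
    (hVbdd : ∀ j : ℕ, j ≤ 3 → ∀ β : Fin n → ℕ, (∑ i, β i) = j → ∀ k : Fin n,
      BddAbove ((fun x => |mderiv' β (fun z => V z k) x|) '' M))
    (ht₀ : 0 < t₀)
    (hYint : ∀ x ∈ ⋃ y ∈ K, Metric.ball y (3:ℝ), ∀ t ∈ Set.Icc (0:ℝ) t₀,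
      IntervalIntegrable (fun s => V (Y x s)) volume 0 t)
    (hY : ∀ x ∈ ⋃ y ∈ K, Metric.ball y (3:ℝ), ∀ t ∈ Set.Icc (0:ℝ) t₀,
      Y x t = x + X t + ∫ s in (0:ℝ)..t, V (Y x s))
    (hYM : ∀ x ∈ ⋃ y ∈ K, Metric.ball y (3:ℝ), ∀ t ∈ Set.Icc (0:ℝ) t₀, Y x t ∈ M)
    {z₁ w d : Fin n → ℝ}
    (hz1 : z₁ ∈ ⋃ y ∈ K, Metric.ball y (3:ℝ)) (hz2 : z₁ + d ∈ ⋃ y ∈ K, Metric.ball y (3:ℝ))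
    (hz3 : z₁ + w ∈ ⋃ y ∈ K, Metric.ball y (3:ℝ))
    (hz4 : z₁ + w + d ∈ ⋃ y ∈ K, Metric.ball y (3:ℝ))
    {t : ℝ} (ht : t ∈ Set.Icc 0 (tstar V M t₀)) :
    ‖(Y (z₁ + w + d) t - Y (z₁ + w) t) - (Y (z₁ + d) t - Y z₁ t)‖
        * (1 - DjNorm 1 V M * t)^2
      ≤ 2 * DjNorm 2 V M * ‖w‖ * ‖d‖ * t := by
  set L := DjNorm 1 V M with hLdef
  set B := DjNorm 2 V M with hBdef
  have hL0 : 0 ≤ L := DjNorm_nonneg 1 M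
  have hB0 : 0 ≤ B := DjNorm_nonneg 2 M
  have hTle : tstar V M t₀ ≤ t₀ := tstar_le_t0 ht₀
  have htt₀ : t ≤ t₀ := ht.2.trans hTle
  have hLhalf : ∀ r ∈ Set.Icc (0:ℝ) t, L * r ≤ 1/2 := by
    intro r hr
    calc L * r ≤ L * tstar V M t₀ :=
          mul_le_mul_of_nonneg_left (hr.2.trans ht.2) hL0
      _ ≤ 1/2 := L_mul_tstar_le
  have ht₀mem : ∀ r, r ∈ Set.Icc (0:ℝ) t → r ∈ Set.Icc (0:ℝ) t₀ :=
    fun r hr => ⟨hr.1, hr.2.trans htt₀⟩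
  set c : ℝ := 2 * B * ‖w‖ * ‖d‖ with hcdef
  have hc0 : 0 ≤ c := by positivity
  -- integrand
  set G : ℝ → Fin n → ℝ := fun r =>
    V (Y (z₁ + w + d) r) - V (Y (z₁ + w) r) - V (Y (z₁ + d) r) + V (Y z₁ r) with hGdef
  have hi1 := hYint z₁ hz1
  have hi2 := hYint _ hz2
  have hi3 := hYint _ hz3
  have hi4 := hYint _ hz4
  have hGint : ∀ r ∈ Set.Icc (0:ℝ) t₀, IntervalIntegrable G volume 0 r := by
    intro r hr
    exact (((hi4 r hr).sub (hi3 r hr)).sub (hi2 r hr)).add (hi1 r hr)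
  set φ : ℝ → Fin n → ℝ := fun r => ∫ τ in (0:ℝ)..r, G τ with hφdef
  have heq : ∀ r ∈ Set.Icc 0 t₀,
      (Y (z₁ + w + d) r - Y (z₁ + w) r) - (Y (z₁ + d) r - Y z₁ r) = φ r := by
    intro r hr
    rw [hφdef]
    simp only
    rw [show (∫ τ in (0:ℝ)..r, G τ)
        = ((∫ τ in (0:ℝ)..r, V (Y (z₁ + w + d) τ)) - ∫ τ in (0:ℝ)..r, V (Y (z₁ + w) τ))
          - (∫ τ in (0:ℝ)..r, V (Y (z₁ + d) τ)) + ∫ τ in (0:ℝ)..r, V (Y z₁ τ) from by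
      rw [← intervalIntegral.integral_sub (hi4 r hr) (hi3 r hr),
        ← intervalIntegral.integral_sub ((hi4 r hr).sub (hi3 r hr)) (hi2 r hr),
        ← intervalIntegral.integral_add (((hi4 r hr).sub (hi3 r hr)).sub (hi2 r hr)) (hi1 r hr)]]
    rw [hY _ hz4 r hr, hY _ hz3 r hr, hY _ hz2 r hr, hY z₁ hz1 r hr]
    abel
  have hφcont : ContinuousOn φ (Set.Icc 0 t₀) := by
    have := intervalIntegral.continuousOn_primitive_interval'
      (a := 0) (b₁ := 0) (b₂ := t₀) (μ := volume) (f := G)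
      (hGint t₀ (Set.right_mem_Icc.2 ht₀.le))
      (by rw [Set.uIcc_of_le ht₀.le]; exact Set.left_mem_Icc.2 ht₀.le)
    rwa [Set.uIcc_of_le ht₀.le] at this
  -- pointwise bound on the integrand
  have hGbd : ∀ r ∈ Set.Icc (0:ℝ) t, ‖G r‖ ≤ c * ((1 - L*r)^2)⁻¹ + L * ‖φ r‖ := by
    intro r hr
    have hrt₀ := ht₀mem r hr
    have hε : (1:ℝ)/2 ≤ 1 - L * r := by have := hLhalf r hr; linarith
    have hεpos : (0:ℝ) < 1 - L * r := by linarith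
    have hrT : r ∈ Set.Icc 0 (tstar V M t₀) := ⟨hr.1, hr.2.trans ht.2⟩
    set a := Y (z₁ + w) r with hadef
    set a' := Y (z₁ + w + d) r with ha'def
    set b := Y z₁ r with hbdef
    set b' := Y (z₁ + d) r with hb'def
    have haM : a ∈ M := hYM _ hz3 r hrt₀
    have ha'M : a' ∈ M := hYM _ hz4 r hrt₀
    have hbM : b ∈ M := hYM _ hz1 r hrt₀
    have hb'M : b' ∈ M := hYM _ hz2 r hrt₀
    have hab : ‖a - b‖ ≤ ‖w‖ / (1 - L*r) := by
      rw [le_div_iff₀ hεpos]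
      have := flow_est hMconv hV hVbdd ht₀ hYint hY hYM hz1 hz3 hrT
      simpa using this
    have ha'b' : ‖a' - b'‖ ≤ ‖w‖ / (1 - L*r) := by
      rw [le_div_iff₀ hεpos]
      have := flow_est hMconv hV hVbdd ht₀ hYint hY hYM hz2 hz4 hrT
      simpa [add_sub_add_right_eq_sub] using this
    have ha'a : ‖a' - a‖ ≤ ‖d‖ / (1 - L*r) := by
      rw [le_div_iff₀ hεpos]
      have := flow_est hMconv hV hVbdd ht₀ hYint hY hYM hz3 hz4 hrT
      simpa [add_sub_cancel_left] using this
    have hWr : (a' - a) - (b' - b) = φ r := heq r hrt₀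
    have hrhs0 : 0 ≤ c * ((1 - L*r)^2)⁻¹ + L * ‖φ r‖ :=
      add_nonneg (mul_nonneg hc0 (by positivity)) (mul_nonneg hL0 (norm_nonneg _))
    rw [pi_norm_le_iff_of_nonneg hrhs0]
    intro k
    have hVk3 : ContDiff ℝ 3 (fun z => V z k) := Vk_contDiff hV k
    have hVkd : Differentiable ℝ (fun z => V z k) := hVk3.differentiable (by norm_num)
    set f : ℝ → ℝ := fun θ =>
      (fun z => V z k) (a + θ • (a' - a)) - (fun z => V z k) (b + θ • (b' - b)) with hfdef
    set f' : ℝ → ℝ := fun θ =>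
      fderiv ℝ (fun z => V z k) (a + θ • (a' - a)) (a' - a)
        - fderiv ℝ (fun z => V z k) (b + θ • (b' - b)) (b' - b) with hf'def
    have hinner : ∀ (p v : Fin n → ℝ) (θ : ℝ),
        HasDerivAt (fun θ : ℝ => p + θ • v) v θ := by
      intro p v θ
      simpa using ((hasDerivAt_id θ).smul_const v).const_add p
    have hf : ∀ θ : ℝ, HasDerivAt f (f' θ) θ := by
      intro θ
      exact ((hVkd _).hasFDerivAt.comp_hasDerivAt θ (hinner a (a' - a) θ)).sub
        ((hVkd _).hasFDerivAt.comp_hasDerivAt θ (hinner b (b' - b) θ))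
    obtain ⟨θ₀, hθ₀, hslope⟩ := exists_hasDerivAt_eq_slope f f' one_pos
      (fun θ _ => (hf θ).continuousAt.continuousWithinAt)
      (fun θ _ => hf θ)
    have hf1 : f 1 = (fun z => V z k) a' - (fun z => V z k) b' := by
      rw [hfdef]; simp
    have hf0 : f 0 = (fun z => V z k) a - (fun z => V z k) b := by
      rw [hfdef]; simp
    have hGrk : G r k = f' θ₀ := by
      rw [hslope, hf1, hf0, hGdef]
      simp only [Pi.add_apply, Pi.sub_apply]
      ring
    set p := a + θ₀ • (a' - a) with hpdef
    set q := b + θ₀ • (b' - b) with hqdef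
    have hpM : p ∈ M := hMconv.add_smul_sub_mem haM ha'M ⟨hθ₀.1.le, hθ₀.2.le⟩
    have hqM : q ∈ M := hMconv.add_smul_sub_mem hbM hb'M ⟨hθ₀.1.le, hθ₀.2.le⟩
    have hpq : ‖p - q‖ ≤ ‖w‖ / (1 - L*r) := by
      have hcomb : p - q = (1 - θ₀) • (a - b) + θ₀ • (a' - b') := by
        rw [hpdef, hqdef]
        module
      rw [hcomb]
      calc ‖(1 - θ₀) • (a - b) + θ₀ • (a' - b')‖
          ≤ ‖(1 - θ₀) • (a - b)‖ + ‖θ₀ • (a' - b')‖ := norm_add_le _ _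
        _ = (1 - θ₀) * ‖a - b‖ + θ₀ * ‖a' - b'‖ := by
            rw [norm_smul, norm_smul, Real.norm_eq_abs, Real.norm_eq_abs,
              abs_of_nonneg (by linarith [hθ₀.2] : (0:ℝ) ≤ 1 - θ₀),
              abs_of_nonneg hθ₀.1.le]
        _ ≤ (1 - θ₀) * (‖w‖ / (1 - L*r)) + θ₀ * (‖w‖ / (1 - L*r)) := by
            apply add_le_add
            · exact mul_le_mul_of_nonneg_left hab (by linarith [hθ₀.2])
            · exact mul_le_mul_of_nonneg_left ha'b' hθ₀.1.le
        _ = ‖w‖ / (1 - L*r) := by ring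
    have hsplit : f' θ₀ = ((fderiv ℝ (fun z => V z k) p) - (fderiv ℝ (fun z => V z k) q)) (a' - a)
        + (fderiv ℝ (fun z => V z k) q) ((a' - a) - (b' - b)) := by
      rw [hf'def]
      simp only [ContinuousLinearMap.sub_apply, map_sub]
      ring
    have hest : |f' θ₀| ≤ 2 * B * ‖p - q‖ * ‖a' - a‖ + L * ‖φ r‖ := by
      rw [hsplit, ← Real.norm_eq_abs]
      calc ‖((fderiv ℝ (fun z => V z k) p) - (fderiv ℝ (fun z => V z k) q)) (a' - a)
          + (fderiv ℝ (fun z => V z k) q) ((a' - a) - (b' - b))‖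
          ≤ ‖((fderiv ℝ (fun z => V z k) p) - (fderiv ℝ (fun z => V z k) q)) (a' - a)‖
            + ‖(fderiv ℝ (fun z => V z k) q) ((a' - a) - (b' - b))‖ := norm_add_le _ _
        _ ≤ ‖(fderiv ℝ (fun z => V z k) p) - (fderiv ℝ (fun z => V z k) q)‖ * ‖a' - a‖
            + ‖fderiv ℝ (fun z => V z k) q‖ * ‖(a' - a) - (b' - b)‖ :=
            add_le_add (ContinuousLinearMap.le_opNorm _ _) (ContinuousLinearMap.le_opNorm _ _)
        _ ≤ (2 * B * ‖p - q‖) * ‖a' - a‖ + L * ‖φ r‖ := by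
            apply add_le_add
            · exact mul_le_mul_of_nonneg_right
                (fderiv_diff_bound hMconv hV hVbdd k hpM hqM) (norm_nonneg _)
            · rw [hWr]
              exact mul_le_mul_of_nonneg_right
                (fderivVk_bound hV hVbdd k hqM) (norm_nonneg _)
        _ = 2 * B * ‖p - q‖ * ‖a' - a‖ + L * ‖φ r‖ := by ring
    have hfinal : 2 * B * ‖p - q‖ * ‖a' - a‖ ≤ c * ((1 - L*r)^2)⁻¹ := by
      calc 2 * B * ‖p - q‖ * ‖a' - a‖
          ≤ 2 * B * (‖w‖ / (1 - L*r)) * (‖d‖ / (1 - L*r)) := by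
            apply mul_le_mul
            · exact mul_le_mul_of_nonneg_left hpq (by positivity)
            · exact ha'a
            · exact norm_nonneg _
            · positivity
        _ = c * ((1 - L*r)^2)⁻¹ := by
            rw [hcdef, pow_two, mul_inv, div_eq_mul_inv, div_eq_mul_inv]
            ring
    show ‖G r k‖ ≤ _
    rw [Real.norm_eq_abs, hGrk]
    linarith [hest, hfinal]
  -- bootstrap
  obtain ⟨r₀, hr₀mem, hr₀max⟩ := (isCompact_Icc (a := (0:ℝ)) (b := t)).exists_isMaxOn
    (Set.nonempty_Icc.2 ht.1) ((hφcont.mono (Set.Icc_subset_Icc le_rfl htt₀)).norm)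
  have hmax : ∀ r ∈ Set.Icc (0:ℝ) t, ‖φ r‖ ≤ ‖φ r₀‖ := fun r hr => hr₀max hr
  have hr₀t₀ := ht₀mem r₀ hr₀mem
  have hLr₀ : L * r₀ ≤ 1/2 := hLhalf r₀ hr₀mem
  have hε₀pos : (0:ℝ) < 1 - L * r₀ := by linarith
  have hS : ‖φ r₀‖ ≤ c * (r₀ * (1 - L*r₀)⁻¹) + r₀ * (L * ‖φ r₀‖) := by
    have h1 : ‖φ r₀‖ ≤ ∫ τ in (0:ℝ)..r₀, ‖G τ‖ := by
      rw [hφdef]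
      exact intervalIntegral.norm_integral_le_integral_norm hr₀mem.1
    have hcontf : ContinuousOn (fun r => c * ((1 - L*r)^2)⁻¹) (Set.uIcc (0:ℝ) r₀) := by
      apply ContinuousOn.mul continuousOn_const
      apply ContinuousOn.inv₀
        (((continuous_const.sub (continuous_const.mul continuous_id)).pow 2)).continuousOn
      intro r hr
      rw [Set.uIcc_of_le hr₀mem.1] at hr
      have : L * r ≤ 1/2 := hLhalf r (Set.Icc_subset_Icc le_rfl hr₀mem.2 hr)
      apply pow_ne_zero
      intro h0; simp only [Pi.sub_apply, Pi.mul_apply, id_eq] at h0; linarith [hLdef]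
    have hcont2 : ContinuousOn (fun r => c * ((1 - L*r)^2)⁻¹ + L * ‖φ r₀‖)
        (Set.uIcc (0:ℝ) r₀) := hcontf.add continuousOn_const
    have h2 : (∫ τ in (0:ℝ)..r₀, ‖G τ‖)
        ≤ ∫ τ in (0:ℝ)..r₀, (c * ((1 - L*τ)^2)⁻¹ + L * ‖φ r₀‖) := by
      apply intervalIntegral.integral_mono_on hr₀mem.1
      · exact ((hGint t₀ (Set.right_mem_Icc.2 ht₀.le)).mono_set (by
          rw [Set.uIcc_of_le ht₀.le, Set.uIcc_of_le hr₀mem.1]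
          exact Set.Icc_subset_Icc le_rfl hr₀t₀.2)).norm
      · exact hcont2.intervalIntegrable
      · intro r hr
        have hr' : r ∈ Set.Icc (0:ℝ) t := Set.Icc_subset_Icc le_rfl hr₀mem.2 hr
        refine (hGbd r hr').trans ?_
        have := hmax r hr'
        have h3 : L * ‖φ r‖ ≤ L * ‖φ r₀‖ := mul_le_mul_of_nonneg_left this hL0
        linarith
    have h4 : (∫ τ in (0:ℝ)..r₀, (c * ((1 - L*τ)^2)⁻¹ + L * ‖φ r₀‖))
        = c * (r₀ * (1 - L*r₀)⁻¹) + r₀ * (L * ‖φ r₀‖) := by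
      rw [intervalIntegral.integral_add hcontf.intervalIntegrable intervalIntegrable_const,
        intervalIntegral.integral_const_mul, integral_inv_sq hL0 hr₀mem.1 hLr₀,
        intervalIntegral.integral_const, smul_eq_mul, sub_zero]
    exact h1.trans (h2.trans_eq h4)
  have hφt : ‖φ t‖ ≤ ‖φ r₀‖ := hmax t (Set.right_mem_Icc.2 ht.1)
  have step1 : ‖φ r₀‖ * (1 - L*r₀) ≤ c * r₀ * (1 - L*r₀)⁻¹ := by nlinarith [hS]
  have step2 : ‖φ r₀‖ * (1 - L*r₀)^2 ≤ c * r₀ := by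
    have h5 := mul_le_mul_of_nonneg_right step1 hε₀pos.le
    calc ‖φ r₀‖ * (1 - L*r₀)^2 = (‖φ r₀‖ * (1 - L*r₀)) * (1 - L*r₀) := by ring
      _ ≤ (c * r₀ * (1 - L*r₀)⁻¹) * (1 - L*r₀) := h5
      _ = c * r₀ := by rw [mul_assoc, inv_mul_cancel₀ hε₀pos.ne', mul_one]
  rw [heq t (ht₀mem t (Set.right_mem_Icc.2 ht.1))]
  have hεt0 : (0:ℝ) ≤ 1 - L*t := by
    have := hLhalf t (Set.right_mem_Icc.2 ht.1); linarith
  have hεle : 1 - L*t ≤ 1 - L*r₀ := by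
    have : L*r₀ ≤ L*t := mul_le_mul_of_nonneg_left hr₀mem.2 hL0
    linarith
  calc ‖φ t‖ * (1 - L*t)^2 ≤ ‖φ r₀‖ * (1 - L*t)^2 :=
        mul_le_mul_of_nonneg_right hφt (by positivity)
    _ ≤ ‖φ r₀‖ * (1 - L*r₀)^2 :=
        mul_le_mul_of_nonneg_left (pow_le_pow_left₀ hεt0 hεle 2) (norm_nonneg _)
    _ ≤ c * r₀ := step2
    _ ≤ c * t := mul_le_mul_of_nonneg_left hr₀mem.2 hc0
    _ = 2 * B * ‖w‖ * ‖d‖ * t := by rw [hcdef]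
end second

/-- In the flow setup, for all `t ∈ (0, t*]`, `x ∈ K₁`, `‖h‖ < 1` and
`i ∈ {1,…,n}`, `‖D_i Y^{x+h}(t) − D_i Y^{x}(t)‖ ≤ 8·‖D^{(2)}V‖_{∞,M}·t*·‖h‖`, where
`D_iY^x(t)` is the limit of the difference quotients (which exists on `K₂`). -/
theorem stmt6 {n : ℕ} (hn : 1 ≤ n) (t₀ : ℝ) (ht₀ : 0 < t₀)
    (K M : Set (Fin n → ℝ)) (hMconv : Convex ℝ M)
    (V : (Fin n → ℝ) → Fin n → ℝ) (hV : ContDiff ℝ 3 V)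
    (hVbdd : ∀ j : ℕ, j ≤ 3 → ∀ β : Fin n → ℕ, (∑ i, β i) = j → ∀ k : Fin n,
      BddAbove ((fun x => |mderiv' β (fun z => V z k) x|) '' M))
    (X : ℝ → Fin n → ℝ) (hX0 : X 0 = 0)
    (Y : (Fin n → ℝ) → ℝ → Fin n → ℝ)
    (hYint : ∀ x ∈ ⋃ y ∈ K, Metric.ball y (3:ℝ), ∀ t ∈ Set.Icc (0:ℝ) t₀,
      IntervalIntegrable (fun s => V (Y x s)) volume 0 t)
    (hY : ∀ x ∈ ⋃ y ∈ K, Metric.ball y (3:ℝ), ∀ t ∈ Set.Icc (0:ℝ) t₀,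
      Y x t = x + X t + ∫ s in (0:ℝ)..t, V (Y x s))
    (hYM : ∀ x ∈ ⋃ y ∈ K, Metric.ball y (3:ℝ), ∀ t ∈ Set.Icc (0:ℝ) t₀, Y x t ∈ M)
    (DY : (Fin n → ℝ) → ℝ → Fin n → Fin n → ℝ)
    (hDY : ∀ t ∈ Set.Ioc (0:ℝ) (tstar V M t₀), ∀ x ∈ ⋃ y ∈ K, Metric.ball y (2:ℝ),
      ∀ i : Fin n,
        Filter.Tendsto (fun u : ℝ => u⁻¹ • (Y (x + u • (Pi.single i 1 : Fin n → ℝ)) t - Y x t))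
          (𝓝[≠] (0:ℝ)) (𝓝 (DY x t i))) :
    ∀ t ∈ Set.Ioc (0:ℝ) (tstar V M t₀), ∀ x ∈ ⋃ y ∈ K, Metric.ball y (1:ℝ),
      ∀ h : Fin n → ℝ, ‖h‖ < 1 → ∀ i : Fin n,
        ‖DY (x + h) t i - DY x t i‖ ≤ 8 * DjNorm 2 V M * tstar V M t₀ * ‖h‖ := by
  intro t ht x hx h hnorm i
  have hL0 : 0 ≤ DjNorm 1 V M := DjNorm_nonneg 1 M
  have hB0 : 0 ≤ DjNorm 2 V M := DjNorm_nonneg 2 M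
  have hLt : DjNorm 1 V M * t ≤ 1/2 := by
    calc DjNorm 1 V M * t ≤ DjNorm 1 V M * tstar V M t₀ :=
          mul_le_mul_of_nonneg_left ht.2 hL0
      _ ≤ 1/2 := L_mul_tstar_le
  simp only [Set.mem_iUnion, Metric.mem_ball] at hx
  obtain ⟨y, hyK, hxy⟩ := hx
  have hmem3 : ∀ w : Fin n → ℝ, dist w y < 3 → w ∈ ⋃ y ∈ K, Metric.ball y (3:ℝ) := by
    intro w hw
    exact Set.mem_iUnion₂.2 ⟨y, hyK, Metric.mem_ball.2 hw⟩
  have hmem2 : ∀ w : Fin n → ℝ, dist w y < 2 → w ∈ ⋃ y ∈ K, Metric.ball y (2:ℝ) := by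
    intro w hw
    exact Set.mem_iUnion₂.2 ⟨y, hyK, Metric.mem_ball.2 hw⟩
  have hdxh : dist (x + h) x = ‖h‖ := by
    rw [dist_eq_norm, add_sub_cancel_left]
  have hx2 : x ∈ ⋃ y ∈ K, Metric.ball y (2:ℝ) := hmem2 x (by linarith)
  have hxh2 : x + h ∈ ⋃ y ∈ K, Metric.ball y (2:ℝ) := by
    apply hmem2
    calc dist (x + h) y ≤ dist (x + h) x + dist x y := dist_triangle _ _ _
      _ < 2 := by rw [hdxh]; linarith
  have hTd := ((hDY t ht (x + h) hxh2 i).sub (hDY t ht x hx2 i)).norm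
  apply le_of_tendsto hTd
  have hev : ∀ᶠ u : ℝ in 𝓝[≠] (0:ℝ), |u| < 1 ∧ u ≠ 0 := by
    have h1 : ∀ᶠ u : ℝ in 𝓝 (0:ℝ), |u| < 1 := by
      have := eventually_abs_sub_lt (0:ℝ) one_pos
      simpa using this
    filter_upwards [eventually_nhdsWithin_of_eventually_nhds h1, self_mem_nhdsWithin]
      with u hu1 hu2
    exact ⟨hu1, hu2⟩
  filter_upwards [hev] with u hu
  obtain ⟨hu1, hu0⟩ := hu
  have hu0' : (0:ℝ) < |u| := abs_pos.2 hu0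
  set e : Fin n → ℝ := Pi.single i 1 with hedef
  have hde : ‖u • e‖ = |u| := by
    rw [norm_smul, hedef, Pi.norm_single, Real.norm_eq_abs, norm_one, mul_one]
  have hdue : ∀ z : Fin n → ℝ, dist (z + u • e) z = |u| := by
    intro z; rw [dist_eq_norm, add_sub_cancel_left, hde]
  have h31 : x ∈ ⋃ y ∈ K, Metric.ball y (3:ℝ) := hmem3 x (by linarith)
  have h32 : x + u • e ∈ ⋃ y ∈ K, Metric.ball y (3:ℝ) := by
    apply hmem3
    calc dist (x + u • e) y ≤ dist (x + u • e) x + dist x y := dist_triangle _ _ _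
      _ < 3 := by rw [hdue]; linarith
  have h33 : x + h ∈ ⋃ y ∈ K, Metric.ball y (3:ℝ) := by
    apply hmem3
    calc dist (x + h) y ≤ dist (x + h) x + dist x y := dist_triangle _ _ _
      _ < 3 := by rw [hdxh]; linarith
  have h34 : x + h + u • e ∈ ⋃ y ∈ K, Metric.ball y (3:ℝ) := by
    apply hmem3
    calc dist (x + h + u • e) y ≤ dist (x + h + u • e) (x + h) + dist (x + h) y :=
          dist_triangle _ _ _
      _ ≤ dist (x + h + u • e) (x + h) + (dist (x + h) x + dist x y) := by
          linarith [dist_triangle (x + h) x y]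
      _ < 3 := by rw [hdue, hdxh]; linarith
  have hW := second_est hMconv hV hVbdd ht₀ hYint hY hYM h31 h32 h33 h34
    (Set.mem_Icc.2 ⟨ht.1.le, ht.2⟩)
  rw [hde] at hW
  set W : Fin n → ℝ := (Y (x + h + u • e) t - Y (x + h) t) - (Y (x + u • e) t - Y x t)
    with hWdef
  have hWbd : ‖W‖ ≤ 8 * DjNorm 2 V M * ‖h‖ * |u| * t := by
    have hsq : (1/2 : ℝ) ≤ 1 - DjNorm 1 V M * t := by linarith
    have h14 : (1/4 : ℝ) ≤ (1 - DjNorm 1 V M * t)^2 := by nlinarith [hsq]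
    have h15 := mul_le_mul_of_nonneg_left h14 (norm_nonneg W)
    linarith [hW, h15]
  show ‖u⁻¹ • (Y (x + h + u • e) t - Y (x + h) t) - u⁻¹ • (Y (x + u • e) t - Y x t)‖
      ≤ 8 * DjNorm 2 V M * tstar V M t₀ * ‖h‖
  rw [← smul_sub, norm_smul, Real.norm_eq_abs, abs_inv, ← hWdef]
  calc |u|⁻¹ * ‖W‖ ≤ |u|⁻¹ * (8 * DjNorm 2 V M * ‖h‖ * |u| * t) :=
        mul_le_mul_of_nonneg_left hWbd (by positivity)
    _ = 8 * DjNorm 2 V M * ‖h‖ * t := by field_simp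
    _ ≤ 8 * DjNorm 2 V M * ‖h‖ * tstar V M t₀ := by
        apply mul_le_mul_of_nonneg_left ht.2 (by positivity)
    _ = 8 * DjNorm 2 V M * tstar V M t₀ * ‖h‖ := by ring
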